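/- Let k₁, k₂ ∈ ℕ, k₃ ∈ ℕ with k₃ ≥ 1, and define w : ℝ³ → ℝ by w(x) = cos(2πk₁x₁/l₁)·cos(2πk₂x₂/l₂)·sin(πk₃x₃/l₃⁺), and the vector fields H := (0, ∂₃w, −∂₂w) and E := (−iωε)⁻¹·(−∂₂²w − ∂₃²w, ∂₁∂₂w, ∂₁∂₃w). Then: (a) the first component H₁ vanishes identically on ℝ³; (b) E₁(x) = 0 and E₂(x) = 0 whenever x₃ = 0 or x₃ = l₃⁺; (c) E and H are l₁-periodic in x₁ and l₂-periodic in x₂; and (d) E₁ is not identically zero on Ω₊ := (0,l₁)×(0,l₂)×(0,l₃⁺). -/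

import Mathlib

open Real Complex Filter Topology

/-- Partial derivative in the first coordinate. -/
noncomputable def pd1 {F : Type*} [NormedAddCommGroup F] [NormedSpace ℝ F]
    (f : ℝ × ℝ × ℝ → F) (x : ℝ × ℝ × ℝ) : F :=
  deriv (fun t => f (t, x.2.1, x.2.2)) x.1

/-- Partial derivative in the second coordinate. -/
noncomputable def pd2 {F : Type*} [NormedAddCommGroup F] [NormedSpace ℝ F]
    (f : ℝ × ℝ × ℝ → F) (x : ℝ × ℝ × ℝ) : F :=
  deriv (fun t => f (x.1, t, x.2.2)) x.2.1

/-- Partial derivative in the third coordinate. -/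
noncomputable def pd3 {F : Type*} [NormedAddCommGroup F] [NormedSpace ℝ F]
    (f : ℝ × ℝ × ℝ → F) (x : ℝ × ℝ × ℝ) : F :=
  deriv (fun t => f (x.1, x.2.1, t)) x.2.2

/-- Curl of a complex vector field on ℝ³. -/
noncomputable def curl3 (F : ℝ × ℝ × ℝ → ℂ × ℂ × ℂ) (x : ℝ × ℝ × ℝ) : ℂ × ℂ × ℂ :=
  (pd2 (fun y => (F y).2.2) x - pd3 (fun y => (F y).2.1) x,
   pd3 (fun y => (F y).1) x - pd1 (fun y => (F y).2.2) x,
   pd1 (fun y => (F y).2.1) x - pd2 (fun y => (F y).1) x)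

/-- Divergence of a complex vector field on ℝ³. -/
noncomputable def div3 (F : ℝ × ℝ × ℝ → ℂ × ℂ × ℂ) (x : ℝ × ℝ × ℝ) : ℂ :=
  pd1 (fun y => (F y).1) x + pd2 (fun y => (F y).2.1) x + pd3 (fun y => (F y).2.2) x

/-- Laplacian of a scalar function on ℝ³. -/
noncomputable def lap {F : Type*} [NormedAddCommGroup F] [NormedSpace ℝ F]
    (f : ℝ × ℝ × ℝ → F) (x : ℝ × ℝ × ℝ) : F :=
  pd1 (pd1 f) x + pd2 (pd2 f) x + pd3 (pd3 f) x

/-- Gradient of a complex scalar function on ℝ³. -/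
noncomputable def grad3 (f : ℝ × ℝ × ℝ → ℂ) (x : ℝ × ℝ × ℝ) : ℂ × ℂ × ℂ :=
  (pd1 f x, pd2 f x, pd3 f x)

section helpers
variable {f : ℝ × ℝ × ℝ → ℂ} {l : ℝ}

lemma per1_pd1 (h : ∀ x : ℝ × ℝ × ℝ, f (x.1 + l, x.2.1, x.2.2) = f x) (x : ℝ × ℝ × ℝ) :
    pd1 f (x.1 + l, x.2.1, x.2.2) = pd1 f x := by
  show deriv (fun t => f (t, x.2.1, x.2.2)) (x.1 + l) = deriv (fun t => f (t, x.2.1, x.2.2)) x.1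
  rw [← deriv_comp_add_const (f := fun t => f (t, x.2.1, x.2.2)) (a := l)]
  congr 1; funext t; exact h (t, x.2.1, x.2.2)

lemma per1_pd2 (h : ∀ x : ℝ × ℝ × ℝ, f (x.1 + l, x.2.1, x.2.2) = f x) (x : ℝ × ℝ × ℝ) :
    pd2 f (x.1 + l, x.2.1, x.2.2) = pd2 f x := by
  show deriv (fun t => f (x.1 + l, t, x.2.2)) x.2.1 = deriv (fun t => f (x.1, t, x.2.2)) x.2.1
  congr 1; funext t; exact h (x.1, t, x.2.2)

lemma per1_pd3 (h : ∀ x : ℝ × ℝ × ℝ, f (x.1 + l, x.2.1, x.2.2) = f x) (x : ℝ × ℝ × ℝ) :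
    pd3 f (x.1 + l, x.2.1, x.2.2) = pd3 f x := by
  show deriv (fun t => f (x.1 + l, x.2.1, t)) x.2.2 = deriv (fun t => f (x.1, x.2.1, t)) x.2.2
  congr 1; funext t; exact h (x.1, x.2.1, t)

lemma per2_pd1 (h : ∀ x : ℝ × ℝ × ℝ, f (x.1, x.2.1 + l, x.2.2) = f x) (x : ℝ × ℝ × ℝ) :
    pd1 f (x.1, x.2.1 + l, x.2.2) = pd1 f x := by
  show deriv (fun t => f (t, x.2.1 + l, x.2.2)) x.1 = deriv (fun t => f (t, x.2.1, x.2.2)) x.1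
  congr 1; funext t; exact h (t, x.2.1, x.2.2)

lemma per2_pd2 (h : ∀ x : ℝ × ℝ × ℝ, f (x.1, x.2.1 + l, x.2.2) = f x) (x : ℝ × ℝ × ℝ) :
    pd2 f (x.1, x.2.1 + l, x.2.2) = pd2 f x := by
  show deriv (fun t => f (x.1, t, x.2.2)) (x.2.1 + l) = deriv (fun t => f (x.1, t, x.2.2)) x.2.1
  rw [← deriv_comp_add_const (f := fun t => f (x.1, t, x.2.2)) (a := l)]
  congr 1; funext t; exact h (x.1, t, x.2.2)

lemma per2_pd3 (h : ∀ x : ℝ × ℝ × ℝ, f (x.1, x.2.1 + l, x.2.2) = f x) (x : ℝ × ℝ × ℝ) :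
    pd3 f (x.1, x.2.1 + l, x.2.2) = pd3 f x := by
  show deriv (fun t => f (x.1, x.2.1 + l, t)) x.2.2 = deriv (fun t => f (x.1, x.2.1, t)) x.2.2
  congr 1; funext t; exact h (x.1, x.2.1, t)

end helpers

lemma hd_cos (c d y : ℝ) :
    HasDerivAt (fun t : ℝ => Real.cos (c * t / d)) (-(Real.sin (c * y / d)) * (c / d)) y := by
  have h1 : HasDerivAt (fun t : ℝ => c * t / d) (c / d) y := by
    simpa using ((hasDerivAt_id y).const_mul c).div_const d
  exact (Real.hasDerivAt_cos _).comp y h1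

lemma hd_sin (c d y : ℝ) :
    HasDerivAt (fun t : ℝ => Real.sin (c * t / d)) (Real.cos (c * y / d) * (c / d)) y := by
  have h1 : HasDerivAt (fun t : ℝ => c * t / d) (c / d) y := by
    simpa using ((hasDerivAt_id y).const_mul c).div_const d
  exact (Real.hasDerivAt_sin _).comp y h1


/-- boundary, interface, periodicity and non-triviality properties of the
upper-half-domain eigenfunction candidate. -/
theorem stmt5 (l₁ l₂ l₃p l₃m ε μ ω : ℝ)
    (hl₁ : 0 < l₁) (hl₂ : 0 < l₂) (hl₃p : 0 < l₃p) (hl₃m : 0 < l₃m)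
    (hε : 0 < ε) (hμ : 0 < μ) (hω : 0 < ω)
    (k₁ k₂ k₃ : ℕ) (hk₃ : 1 ≤ k₃)
    (w : ℝ × ℝ × ℝ → ℂ)
    (hw : w = fun x => ((Real.cos (2 * π * (k₁ : ℝ) * x.1 / l₁) *
        Real.cos (2 * π * (k₂ : ℝ) * x.2.1 / l₂) *
        Real.sin (π * (k₃ : ℝ) * x.2.2 / l₃p) : ℝ) : ℂ))
    (E H : ℝ × ℝ × ℝ → ℂ × ℂ × ℂ)
    (hH : H = fun x => (0, pd3 w x, -(pd2 w x)))
    (hE : E = fun x => (-(Complex.I * (ω : ℂ) * (ε : ℂ)))⁻¹ •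
        ((-(pd2 (pd2 w) x) - pd3 (pd3 w) x, pd1 (pd2 w) x, pd1 (pd3 w) x) : ℂ × ℂ × ℂ)) :
    (∀ x : ℝ × ℝ × ℝ, (H x).1 = 0) ∧
    (∀ x : ℝ × ℝ × ℝ, x.2.2 = 0 ∨ x.2.2 = l₃p → (E x).1 = 0 ∧ (E x).2.1 = 0) ∧
    (∀ x : ℝ × ℝ × ℝ, E (x.1 + l₁, x.2.1, x.2.2) = E x ∧ E (x.1, x.2.1 + l₂, x.2.2) = E x ∧
      H (x.1 + l₁, x.2.1, x.2.2) = H x ∧ H (x.1, x.2.1 + l₂, x.2.2) = H x) ∧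
    (∃ x : ℝ × ℝ × ℝ,
      (x.1 ∈ Set.Ioo 0 l₁ ∧ x.2.1 ∈ Set.Ioo 0 l₂ ∧ x.2.2 ∈ Set.Ioo 0 l₃p) ∧ (E x).1 ≠ 0) := by
  have hk₃' : (0:ℝ) < (k₃:ℝ) := by exact_mod_cast hk₃
  have hk₃'' : (1:ℝ) ≤ (k₃:ℝ) := by exact_mod_cast hk₃
  -- periodicity of w
  have hwp1 : ∀ x : ℝ × ℝ × ℝ, w (x.1 + l₁, x.2.1, x.2.2) = w x := by
    intro x; rw [hw]; simp only
    have harg : 2 * π * (k₁:ℝ) * (x.1 + l₁) / l₁ = 2 * π * (k₁:ℝ) * x.1 / l₁ + (k₁:ℝ) * (2 * π) := by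
      field_simp
    rw [harg, Real.cos_add_nat_mul_two_pi]
  have hwp2 : ∀ x : ℝ × ℝ × ℝ, w (x.1, x.2.1 + l₂, x.2.2) = w x := by
    intro x; rw [hw]; simp only
    have harg : 2 * π * (k₂:ℝ) * (x.2.1 + l₂) / l₂ = 2 * π * (k₂:ℝ) * x.2.1 / l₂ + (k₂:ℝ) * (2 * π) := by
      field_simp
    rw [harg, Real.cos_add_nat_mul_two_pi]
  -- derivative formulas
  have hpd2 : ∀ x : ℝ × ℝ × ℝ, pd2 w x =
      ((Real.cos (2 * π * (k₁:ℝ) * x.1 / l₁) *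
        (-(Real.sin (2 * π * (k₂:ℝ) * x.2.1 / l₂)) * (2 * π * (k₂:ℝ) / l₂)) *
        Real.sin (π * (k₃:ℝ) * x.2.2 / l₃p) : ℝ) : ℂ) := by
    intro x; rw [hw]; unfold pd2
    show deriv (fun t => ((Real.cos (2 * π * (k₁:ℝ) * x.1 / l₁) *
        Real.cos (2 * π * (k₂:ℝ) * t / l₂) *
        Real.sin (π * (k₃:ℝ) * x.2.2 / l₃p) : ℝ) : ℂ)) x.2.1 = _
    exact ((((hd_cos (2 * π * (k₂:ℝ)) l₂ x.2.1).const_mul _).mul_const _).ofReal_comp).deriv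
  have hpd3 : ∀ x : ℝ × ℝ × ℝ, pd3 w x =
      ((Real.cos (2 * π * (k₁:ℝ) * x.1 / l₁) * Real.cos (2 * π * (k₂:ℝ) * x.2.1 / l₂) *
        (Real.cos (π * (k₃:ℝ) * x.2.2 / l₃p) * (π * (k₃:ℝ) / l₃p)) : ℝ) : ℂ) := by
    intro x; rw [hw]; unfold pd3
    show deriv (fun t => ((Real.cos (2 * π * (k₁:ℝ) * x.1 / l₁) *
        Real.cos (2 * π * (k₂:ℝ) * x.2.1 / l₂) *
        Real.sin (π * (k₃:ℝ) * t / l₃p) : ℝ) : ℂ)) x.2.2 = _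
    exact (((hd_sin (π * (k₃:ℝ)) l₃p x.2.2).const_mul _).ofReal_comp).deriv
  have hpd22 : ∀ x : ℝ × ℝ × ℝ, pd2 (pd2 w) x =
      ((Real.cos (2 * π * (k₁:ℝ) * x.1 / l₁) *
        (-(Real.cos (2 * π * (k₂:ℝ) * x.2.1 / l₂) * (2 * π * (k₂:ℝ) / l₂)) * (2 * π * (k₂:ℝ) / l₂)) *
        Real.sin (π * (k₃:ℝ) * x.2.2 / l₃p) : ℝ) : ℂ) := by
    intro x
    show deriv (fun t => pd2 w (x.1, t, x.2.2)) x.2.1 = _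
    have hfun : (fun t => pd2 w (x.1, t, x.2.2)) = fun t =>
        ((Real.cos (2 * π * (k₁:ℝ) * x.1 / l₁) *
          (-(Real.sin (2 * π * (k₂:ℝ) * t / l₂)) * (2 * π * (k₂:ℝ) / l₂)) *
          Real.sin (π * (k₃:ℝ) * x.2.2 / l₃p) : ℝ) : ℂ) := funext fun t => hpd2 (x.1, t, x.2.2)
    rw [hfun]
    exact ((((((hd_sin (2 * π * (k₂:ℝ)) l₂ x.2.1).neg.mul_const _).const_mul _).mul_const _)).ofReal_comp).deriv
  have hpd33 : ∀ x : ℝ × ℝ × ℝ, pd3 (pd3 w) x =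
      ((Real.cos (2 * π * (k₁:ℝ) * x.1 / l₁) * Real.cos (2 * π * (k₂:ℝ) * x.2.1 / l₂) *
        (-(Real.sin (π * (k₃:ℝ) * x.2.2 / l₃p)) * (π * (k₃:ℝ) / l₃p) * (π * (k₃:ℝ) / l₃p)) : ℝ) : ℂ) := by
    intro x
    show deriv (fun t => pd3 w (x.1, x.2.1, t)) x.2.2 = _
    have hfun : (fun t => pd3 w (x.1, x.2.1, t)) = fun t =>
        ((Real.cos (2 * π * (k₁:ℝ) * x.1 / l₁) * Real.cos (2 * π * (k₂:ℝ) * x.2.1 / l₂) *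
          (Real.cos (π * (k₃:ℝ) * t / l₃p) * (π * (k₃:ℝ) / l₃p)) : ℝ) : ℂ) :=
      funext fun t => hpd3 (x.1, x.2.1, t)
    rw [hfun]
    exact ((((hd_cos (π * (k₃:ℝ)) l₃p x.2.2).mul_const _).const_mul _).ofReal_comp).deriv
  have hpd12 : ∀ x : ℝ × ℝ × ℝ, pd1 (pd2 w) x =
      ((-(Real.sin (2 * π * (k₁:ℝ) * x.1 / l₁)) * (2 * π * (k₁:ℝ) / l₁) *
        (-(Real.sin (2 * π * (k₂:ℝ) * x.2.1 / l₂)) * (2 * π * (k₂:ℝ) / l₂)) *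
        Real.sin (π * (k₃:ℝ) * x.2.2 / l₃p) : ℝ) : ℂ) := by
    intro x
    show deriv (fun t => pd2 w (t, x.2.1, x.2.2)) x.1 = _
    have hfun : (fun t => pd2 w (t, x.2.1, x.2.2)) = fun t =>
        ((Real.cos (2 * π * (k₁:ℝ) * t / l₁) *
          (-(Real.sin (2 * π * (k₂:ℝ) * x.2.1 / l₂)) * (2 * π * (k₂:ℝ) / l₂)) *
          Real.sin (π * (k₃:ℝ) * x.2.2 / l₃p) : ℝ) : ℂ) := funext fun t => hpd2 (t, x.2.1, x.2.2)
    rw [hfun]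
    exact ((((hd_cos (2 * π * (k₁:ℝ)) l₁ x.1).mul_const _).mul_const _).ofReal_comp).deriv
  -- periodicity of derivatives
  have h2p1 := per1_pd2 hwp1
  have h3p1 := per1_pd3 hwp1
  have h2p2 := per2_pd2 hwp2
  have h3p2 := per2_pd3 hwp2
  refine ⟨?_, ?_, ?_, ?_⟩
  · intro x; rw [hH]
  · intro x hx
    have hS : Real.sin (π * (k₃:ℝ) * x.2.2 / l₃p) = 0 := by
      rcases hx with h | h
      · simp [h]
      · have harg : π * (k₃:ℝ) * l₃p / l₃p = (k₃:ℝ) * π := by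
          field_simp
        rw [h, harg, Real.sin_nat_mul_pi]
    rw [hE]; simp only [Prod.smul_mk]
    constructor
    · show (-(Complex.I * (ω:ℂ) * (ε:ℂ)))⁻¹ • (-(pd2 (pd2 w) x) - pd3 (pd3 w) x) = 0
      rw [hpd22 x, hpd33 x, hS]; simp
    · show (-(Complex.I * (ω:ℂ) * (ε:ℂ)))⁻¹ • pd1 (pd2 w) x = 0
      rw [hpd12 x, hS]; simp
  · intro x
    refine ⟨?_, ?_, ?_, ?_⟩
    · rw [hE]; simp only
      rw [per1_pd2 h2p1 x, per1_pd3 h3p1 x, per1_pd1 h2p1 x, per1_pd1 h3p1 x]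
    · rw [hE]; simp only
      rw [per2_pd2 h2p2 x, per2_pd3 h3p2 x, per2_pd1 h2p2 x, per2_pd1 h3p2 x]
    · rw [hH]; simp only
      rw [per1_pd3 hwp1 x, per1_pd2 hwp1 x]
    · rw [hH]; simp only
      rw [per2_pd3 hwp2 x, per2_pd2 hwp2 x]
  · refine ⟨(l₁ / (8 * ((k₁:ℝ) + 1)), l₂ / (8 * ((k₂:ℝ) + 1)), l₃p / (2 * (k₃:ℝ))), ⟨⟨?_, ?_⟩, ⟨?_, ?_⟩, ?_, ?_⟩, ?_⟩
    · positivity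
    · exact div_lt_self hl₁ (by nlinarith [Nat.cast_nonneg (α := ℝ) k₁])
    · positivity
    · exact div_lt_self hl₂ (by nlinarith [Nat.cast_nonneg (α := ℝ) k₂])
    · positivity
    · exact div_lt_self hl₃p (by linarith)
    · rw [hE]; simp only [Prod.smul_mk]
      show (-(Complex.I * (ω:ℂ) * (ε:ℂ)))⁻¹ •
          (-(pd2 (pd2 w) (l₁ / (8 * ((k₁:ℝ) + 1)), l₂ / (8 * ((k₂:ℝ) + 1)), l₃p / (2 * (k₃:ℝ)))) -
            pd3 (pd3 w) (l₁ / (8 * ((k₁:ℝ) + 1)), l₂ / (8 * ((k₂:ℝ) + 1)), l₃p / (2 * (k₃:ℝ)))) ≠ 0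
      rw [hpd22 _, hpd33 _]
      simp only
      have e₁ : 2 * π * (k₁:ℝ) * (l₁ / (8 * ((k₁:ℝ) + 1))) / l₁ = π * (k₁:ℝ) / (4 * ((k₁:ℝ) + 1)) := by
        have h8 : (8:ℝ) * ((k₁:ℝ) + 1) ≠ 0 := by positivity
        field_simp
        ring
      have e₂ : 2 * π * (k₂:ℝ) * (l₂ / (8 * ((k₂:ℝ) + 1))) / l₂ = π * (k₂:ℝ) / (4 * ((k₂:ℝ) + 1)) := by
        have h8 : (8:ℝ) * ((k₂:ℝ) + 1) ≠ 0 := by positivity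
        field_simp
        ring
      have e₃ : π * (k₃:ℝ) * (l₃p / (2 * (k₃:ℝ))) / l₃p = π / 2 := by
        field_simp
      rw [e₁, e₂, e₃, Real.sin_pi_div_two]
      have hA : 0 < Real.cos (π * (k₁:ℝ) / (4 * ((k₁:ℝ) + 1))) := by
        apply Real.cos_pos_of_mem_Ioo
        constructor
        · have : (0:ℝ) ≤ π * (k₁:ℝ) / (4 * ((k₁:ℝ) + 1)) := by positivity
          nlinarith [Real.pi_pos]
        · rw [div_lt_div_iff₀ (by positivity) (by norm_num : (0:ℝ) < 2)]
          nlinarith [Real.pi_pos, Nat.cast_nonneg (α := ℝ) k₁]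
      have hB : 0 < Real.cos (π * (k₂:ℝ) / (4 * ((k₂:ℝ) + 1))) := by
        apply Real.cos_pos_of_mem_Ioo
        constructor
        · have : (0:ℝ) ≤ π * (k₂:ℝ) / (4 * ((k₂:ℝ) + 1)) := by positivity
          nlinarith [Real.pi_pos]
        · rw [div_lt_div_iff₀ (by positivity) (by norm_num : (0:ℝ) < 2)]
          nlinarith [Real.pi_pos, Nat.cast_nonneg (α := ℝ) k₂]
      have hb : (0:ℝ) ≤ 2 * π * (k₂:ℝ) / l₂ := by positivity
      have hc : (0:ℝ) < π * (k₃:ℝ) / l₃p := by positivity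
      rw [smul_eq_mul]
      apply mul_ne_zero
      · apply inv_ne_zero
        simp [Complex.ext_iff, hω.ne', hε.ne']
      · rw [← Complex.ofReal_neg, ← Complex.ofReal_sub]
        refine Complex.ofReal_ne_zero.mpr (ne_of_gt ?_)
        nlinarith [mul_pos (mul_pos hA hB) (mul_pos hc hc),
          mul_nonneg (mul_pos hA hB).le (mul_self_nonneg (2 * π * (k₂:ℝ) / l₂)),
          mul_nonneg (mul_nonneg (mul_pos hA hB).le hb) hb]
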